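/- Let r ≥ 2 and c be integers with the same parity, -r+2 ≤ c ≤ 0, and write |c| = r - 2k. The set of negative integers x such that d_pc(O,(x,x+c)) = r equals the translated interval ([k-r,-1] ∩ ℤ) + c(k-1) - k(k-1)/2 if k is odd, and ([0,r-k-1] ∩ ℤ) + ck - (k+1)k/2 if k is even. -/

import Mathlib

def Lp : ℤ × ℤ → ℤ × ℤ := fun p => (-p.1 + 2*p.2 + 1, p.2)
def Lpp : ℤ × ℤ → ℤ × ℤ := fun p => (p.1, 2*p.1 - p.2 + 1)
def Mr : ℤ × ℤ → ℤ × ℤ := fun p => (p.1 + 1, p.2)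
def Ml : ℤ × ℤ → ℤ × ℤ := fun p => (p.1 - 1, p.2)
def Mu : ℤ × ℤ → ℤ × ℤ := fun p => (p.1, p.2 + 1)
def Md : ℤ × ℤ → ℤ × ℤ := fun p => (p.1, p.2 - 1)

def ops : Set ((ℤ × ℤ) → (ℤ × ℤ)) := {Lp, Lpp, Mr, Ml, Mu, Md}

/-- The parabolic-taxicab distance: minimal number of operators from `ops`
needed to map `P` to `Q`. -/
noncomputable def dpc (P Q : ℤ × ℤ) : ℕ :=
  sInf {n | ∃ l : List ((ℤ × ℤ) → (ℤ × ℤ)), l.length = n ∧ (∀ f ∈ l, f ∈ ops) ∧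
    l.foldr (fun f p => f p) P = Q}

def RZ (m : ℤ) (P Q : ℤ × ℤ) : Prop :=
  ∃ n : ℕ, (n : ℤ) = m ∧ ∃ l : List ((ℤ × ℤ) → (ℤ × ℤ)), l.length = n ∧ (∀ f ∈ l, f ∈ ops) ∧
    l.foldr (fun f p => f p) P = Q

lemma rz_refl (P : ℤ × ℤ) : RZ 0 P P := ⟨0, rfl, [], rfl, by simp, rfl⟩

lemma rz_cons {m : ℤ} {P Q : ℤ × ℤ} (h : RZ m P Q) {f} (hf : f ∈ ops) :
    RZ (m+1) P (f Q) := by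
  obtain ⟨n, hn, l, hl, ho, he⟩ := h
  exact ⟨n+1, by push_cast; omega, f :: l, by simp [hl], by
    intro g hg; rcases List.mem_cons.1 hg with h|h; · subst h; exact hf
    · exact ho g h, by simp [he]⟩

lemma rz_md {m : ℤ} {P : ℤ × ℤ} {x y : ℤ} (h : RZ m P (x, y)) (t : ℕ) :
    RZ (m + t) P (x, y - t) := by
  induction t with
  | zero => simpa using h
  | succ t ih =>
    have := rz_cons ih (f := Md) (by simp [ops])
    simp only [Md] at this
    push_cast
    rw [show m + ((t:ℤ) + 1) = m + (t:ℤ) + 1 from by ring,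
        show y - ((t:ℤ) + 1) = y - (t:ℤ) - 1 from by ring]
    exact this
lemma rz_ml {m : ℤ} {P : ℤ × ℤ} {x y : ℤ} (h : RZ m P (x, y)) (t : ℕ) :
    RZ (m + t) P (x - t, y) := by
  induction t with
  | zero => simpa using h
  | succ t ih =>
    have := rz_cons ih (f := Ml) (by simp [ops])
    simp only [Ml] at this
    push_cast
    rw [show m + ((t:ℤ) + 1) = m + (t:ℤ) + 1 from by ring,
        show x - ((t:ℤ) + 1) = x - (t:ℤ) - 1 from by ring]
    exact this

lemma rz_mdz {m : ℤ} {P : ℤ × ℤ} {x y : ℤ} (h : RZ m P (x, y)) {t : ℤ} (ht : 0 ≤ t) :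
    RZ (m + t) P (x, y - t) := by
  have := rz_md h t.toNat
  rwa [Int.toNat_of_nonneg ht] at this
lemma rz_mlz {m : ℤ} {P : ℤ × ℤ} {x y : ℤ} (h : RZ m P (x, y)) {t : ℤ} (ht : 0 ≤ t) :
    RZ (m + t) P (x - t, y) := by
  have := rz_ml h t.toNat
  rwa [Int.toNat_of_nonneg ht] at this

lemma choose_db (k : ℕ) (c a : ℤ) (hc : c ≤ 0) (ha : 0 ≤ a)
    (hb : 2*a ≤ 2*(k+1)*(-c) + (k+1)*(k+2)) :
    ∃ d b : ℤ, 0 ≤ d ∧ d ≤ -c + 1 ∧ 0 ≤ b ∧ 2*b ≤ 2*k*d + k*(k+1) ∧ a = b + d := by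
  have hk0 : (0:ℤ) ≤ (k:ℤ) := Int.ofNat_nonneg k
  revert hb
  refine Int.le_induction (motive := fun a _ => 2*a ≤ 2*((k:ℤ)+1)*(-c) + ((k:ℤ)+1)*((k:ℤ)+2) → ∃ d b : ℤ, 0 ≤ d ∧ d ≤ -c + 1 ∧ 0 ≤ b ∧ 2*b ≤ 2*(k:ℤ)*d + (k:ℤ)*((k:ℤ)+1) ∧ a = b + d) ?_ ?_ a ha
  · intro _
    exact ⟨0, 0, le_refl _, by linarith, le_refl _, by nlinarith, by ring⟩
  · intro a ha' ih hb
    have hb' : 2*a ≤ 2*(k+1)*(-c) + (k+1)*(k+2) := by linarith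
    obtain ⟨d, b, hd0, hd1, hb0, hbb, hab⟩ := ih hb'
    by_cases h1 : 2*(b+1) ≤ 2*k*d + k*(k+1)
    · exact ⟨d, b+1, hd0, hd1, by linarith, h1, by linarith⟩
    · by_cases h2 : d + 1 ≤ -c + 1
      · refine ⟨d+1, b, by linarith, h2, hb0, ?_, by linarith⟩
        have : 2*k*(d+1) = 2*k*d + 2*k := by ring
        linarith
      · exfalso
        have hd : d = -c + 1 := by linarith
        have h3 : 2*k*d + k*(k+1) ≤ 2*b + 1 := by linarith
        rw [hd] at h3
        have e1 : 2*(k+1)*(-c) + (k+1)*(k+2) = (2*k*(-c+1) + k*(k+1)) + 2 - 2*c := by ring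
        linarith

lemma ub : ∀ k : ℕ, ∀ c a : ℤ, c ≤ 0 → 0 ≤ a → 2*a ≤ 2*k*(-c) + k*(k+1) →
    RZ (-c + 2*k) (0,0) (-a, -a+c) ∧ RZ (-c + 2*k) (0,0) (-a+c, -a) := by
  intro k
  induction k with
  | zero =>
    intro c a hc ha hb
    have ha0 : a = 0 := by push_cast at hb; omega
    subst ha0
    constructor
    · have := rz_mdz (rz_refl ((0:ℤ),(0:ℤ))) (t := -c) (by linarith)
      simp only [zero_add, zero_sub, neg_neg] at this
      push_cast
      simpa using this
    · have := rz_mlz (rz_refl ((0:ℤ),(0:ℤ))) (t := -c) (by linarith)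
      simp only [zero_add, zero_sub, neg_neg] at this
      push_cast
      simpa using this
  | succ k ih =>
    intro c a hc ha hb
    have hk0 : (0:ℤ) ≤ (k:ℤ) := Int.ofNat_nonneg k
    push_cast at hb
    obtain ⟨d, b, hd0, hd1, hb0, hbb, hab⟩ := choose_db k c a hc ha (by linarith)
    have ht : (0:ℤ) ≤ 1 - d - c := by linarith
    constructor
    · have H := (ih (-d) b (by linarith) hb0 (by rw [neg_neg]; exact hbb)).2
      rw [neg_neg] at H
      have H2 := rz_cons H (f := Lpp) (by simp [ops])
      simp only [Lpp] at H2
      have H3 := rz_mdz H2 ht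
      push_cast
      rw [show -c + 2*((k:ℤ)+1) = d + 2*(k:ℤ) + 1 + (1 - d - c) from by ring]
      rw [show ((-a, -a+c) : ℤ × ℤ) = (-b + -d, 2*(-b + -d) - -b + 1 - (1 - d - c)) from by
        rw [Prod.mk.injEq]; constructor <;> [omega; omega]]
      exact H3
    · have H := (ih (-d) b (by linarith) hb0 (by rw [neg_neg]; exact hbb)).1
      rw [neg_neg] at H
      have H2 := rz_cons H (f := Lp) (by simp [ops])
      simp only [Lp] at H2
      have H3 := rz_mlz H2 ht
      push_cast
      rw [show -c + 2*((k:ℤ)+1) = d + 2*(k:ℤ) + 1 + (1 - d - c) from by ring]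
      rw [show ((-a+c, -a) : ℤ × ℤ) = (-(-b) + 2*(-b + -d) + 1 - (1 - d - c), -b + -d) from by
        rw [Prod.mk.injEq]; constructor <;> [omega; omega]]
      exact H3

def Einv (n x y : ℤ) : Prop :=
  (x + y + n) % 2 = 0 ∧ x - y ≤ n ∧ y - x ≤ n ∧
  (y ≤ x → -8*x ≤ (n-(x-y))*(n+3*(x-y)+2)) ∧
  (x ≤ y → -8*y ≤ (n-(y-x))*(n+3*(y-x)+2))

lemma Einv_swap {n x y : ℤ} (h : Einv n x y) : Einv n y x := by
  obtain ⟨h1, h2, h3, h4, h5⟩ := h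
  exact ⟨by omega, h3, h2, h5, h4⟩

lemma Einv_mr {n x y : ℤ} (hn : 0 ≤ n) (h : Einv n x y) : Einv (n+1) (x+1) y := by
  obtain ⟨h1, h2, h3, h4, h5⟩ := h
  refine ⟨by omega, by omega, by omega, ?_, ?_⟩
  · intro hle
    rcases le_total y x with h0 | h0
    · have := h4 h0; nlinarith [this]
    · have := h5 h0; nlinarith [this]
  · intro hle
    have := h5 (by omega)
    nlinarith [this]

lemma Einv_ml {n x y : ℤ} (hn : 0 ≤ n) (h : Einv n x y) : Einv (n+1) (x-1) y := by
  obtain ⟨h1, h2, h3, h4, h5⟩ := h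
  refine ⟨by omega, by omega, by omega, ?_, ?_⟩
  · intro hle
    have := h4 (by omega)
    nlinarith [this]
  · intro hle
    rcases le_total y x with h0 | h0
    · have := h4 h0; nlinarith [this]
    · have := h5 h0; nlinarith [this]

lemma Einv_lp {n x y : ℤ} (hn : 0 ≤ n) (h : Einv n x y) : Einv (n+1) (-x+2*y+1) y := by
  obtain ⟨h1, h2, h3, h4, h5⟩ := h
  refine ⟨by omega, by omega, by omega, ?_, ?_⟩
  · intro hle
    rcases le_total y x with h0 | h0
    · have := h4 h0; nlinarith [this]
    · have := h5 h0; nlinarith [this]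
  · intro hle
    have := h4 (by omega)
    nlinarith [this]

lemma Einv_step {n x y : ℤ} (hn : 0 ≤ n) (h : Einv n x y) {f} (hf : f ∈ ops) :
    Einv (n+1) (f (x,y)).1 (f (x,y)).2 := by
  have hs := Einv_swap h
  simp only [ops, Set.mem_insert_iff, Set.mem_singleton_iff] at hf
  rcases hf with rfl | rfl | rfl | rfl | rfl | rfl
  · simpa [Lp] using Einv_lp hn h
  · have h2 := Einv_swap (Einv_lp hn hs)
    rw [show -y+2*x+1 = 2*x-y+1 from by ring] at h2
    simpa [Lpp] using h2
  · simpa [Mr] using Einv_mr hn h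
  · simpa [Ml] using Einv_ml hn h
  · simpa [Mu] using Einv_swap (Einv_mr hn hs)
  · simpa [Md] using Einv_swap (Einv_ml hn hs)

lemma Einv_list : ∀ l : List ((ℤ × ℤ) → (ℤ × ℤ)), (∀ f ∈ l, f ∈ ops) →
    Einv l.length (l.foldr (fun f p => f p) ((0:ℤ),(0:ℤ))).1
      (l.foldr (fun f p => f p) ((0:ℤ),(0:ℤ))).2 := by
  intro l
  induction l with
  | nil => intro _; exact ⟨by norm_num, by norm_num, by norm_num, by norm_num, by norm_num⟩
  | cons f l ih =>
    intro ho
    have h1 := ih (fun g hg => ho g (List.mem_cons_of_mem f hg))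
    have hf := ho f List.mem_cons_self
    have h2 := Einv_step (n := (l.length : ℤ)) (by positivity) h1 hf
    simp only [List.foldr_cons, List.length_cons]
    push_cast
    convert h2 using 3 <;> simp

lemma dpc_le {m : ℤ} {Q : ℤ × ℤ} (h : RZ m (0,0) Q) : (dpc (0,0) Q : ℤ) ≤ m := by
  obtain ⟨n, hn, l, hl, ho, he⟩ := h
  have : dpc (0,0) Q ≤ n := Nat.sInf_le ⟨l, hl, ho, he⟩
  calc (dpc (0,0) Q : ℤ) ≤ (n : ℤ) := by exact_mod_cast this
    _ = m := hn

lemma dpc_inv {m : ℤ} {Q : ℤ × ℤ} (h : RZ m (0,0) Q) :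
    Einv (dpc (0,0) Q : ℤ) Q.1 Q.2 := by
  obtain ⟨n, hn, l, hl, ho, he⟩ := h
  have hne : {n | ∃ l : List ((ℤ × ℤ) → (ℤ × ℤ)), l.length = n ∧ (∀ f ∈ l, f ∈ ops) ∧
      l.foldr (fun f p => f p) ((0:ℤ),(0:ℤ)) = Q}.Nonempty := ⟨n, l, hl, ho, he⟩
  obtain ⟨l', hl', ho', he'⟩ := Nat.sInf_mem hne
  have := Einv_list l' ho'
  rw [he'] at this
  rwa [hl'] at this

lemma exists_j (c : ℤ) (hc : c ≤ 0) : ∀ A : ℤ, 1 ≤ A →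
    ∃ j : ℤ, 1 ≤ j ∧ 2*(j-1)*(-c) + (j-1)*j < 2*A ∧ 2*A ≤ 2*j*(-c) + j*(j+1) := by
  intro A hA
  refine Int.le_induction (motive := fun A _ => ∃ j : ℤ, 1 ≤ j ∧ 2*(j-1)*(-c) + (j-1)*j < 2*A ∧ 2*A ≤ 2*j*(-c) + j*(j+1)) ?_ ?_ A hA
  · exact ⟨1, le_refl _, by norm_num, by norm_num; linarith⟩
  · intro A hA' ih
    obtain ⟨j, hj1, hjl, hjr⟩ := ih
    by_cases h : 2*(A+1) ≤ 2*j*(-c) + j*(j+1)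
    · exact ⟨j, hj1, by linarith, h⟩
    · refine ⟨j+1, by linarith, ?_, ?_⟩
      · have e : 2*((j+1)-1)*(-c) + ((j+1)-1)*(j+1) = 2*j*(-c) + j*(j+1) := by ring
        rw [e]; linarith
      · have e : 2*(j+1)*(-c) + (j+1)*((j+1)+1) = (2*j*(-c) + j*(j+1)) + 2*(-c) + 2*(j+1) := by ring
        rw [e]; linarith

lemma dpc_line (x c j : ℤ) (hx : x < 0) (hc : c ≤ 0) (hj : 1 ≤ j)
    (h1 : 2*(j-1)*(-c) + (j-1)*j < -2*x) (h2 : -2*x ≤ 2*j*(-c) + j*(j+1)) :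
    (dpc (0,0) (x, x+c) : ℤ) = -c + 2*j := by
  have hjt : ((j.toNat : ℤ)) = j := Int.toNat_of_nonneg (by linarith)
  have hub0 := (ub j.toNat c (-x) hc (by linarith) (by rw [hjt]; linarith)).1
  rw [hjt, neg_neg] at hub0
  have hub : RZ (-c + 2*j) (0,0) (x, x+c) := hub0
  have hle := dpc_le hub
  have hinv := dpc_inv hub
  set N : ℤ := (dpc ((0:ℤ),(0:ℤ)) (x, x+c) : ℤ) with hN
  have hN0 : 0 ≤ N := Int.ofNat_nonneg _
  obtain ⟨e1, e2, e3, e4, e5⟩ := hinv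
  simp only at e1 e2 e3 e4 e5
  have hxy : (x : ℤ) + c ≤ x := by linarith
  have hC := e4 hxy
  -- x - (x+c) = -c
  rw [show x - (x+c) = -c from by ring] at hC
  -- parity : N ≡ -c (mod 2)
  by_contra hne
  have hlt : N < -c + 2*j := lt_of_le_of_ne hle hne
  have hpar : (x + (x+c) + N) % 2 = 0 := e1
  have hNle : N ≤ -c + 2*j - 2 := by omega
  -- monotonicity of (N+c)(N-3c+2) in N
  have hmono : (N + c) * (N - 3*c + 2) ≤ (2*j-2) * (2*j-2-4*c+2) := by
    have hcN : 0 ≤ N + c := by rw [show x - (x+c) = -c from by ring] at e2; linarith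
    nlinarith [hcN, hNle]
  have : -8*x ≤ (2*j-2)*(2*j-4*c) := by
    calc -8*x ≤ (N - -c)*(N + 3*(-c) + 2) := hC
      _ = (N + c) * (N - 3*c + 2) := by ring
      _ ≤ (2*j-2) * (2*j-2-4*c+2) := hmono
      _ = (2*j-2)*(2*j-4*c) := by ring
  nlinarith [h1, this]

theorem neg_part_of_boundary_lines_nonpos_c (r c k : ℤ) (hr : 2 ≤ r)
    (hpar : c % 2 = r % 2) (hc0 : c ≤ 0) (hcl : -r + 2 ≤ c) (hk : |c| = r - 2 * k) :
    (Odd k →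
      {x : ℤ | x < 0 ∧ (dpc (0, 0) (x, x + c) : ℤ) = r} =
        (fun x => x + (c * (k - 1) - k * (k - 1) / 2)) '' Set.Icc (k - r) (-1)) ∧
    (Even k →
      {x : ℤ | x < 0 ∧ (dpc (0, 0) (x, x + c) : ℤ) = r} =
        (fun x => x + (c * k - (k + 1) * k / 2)) '' Set.Icc 0 (r - k - 1)) := by
  have hc' : -c = r - 2*k := by rwa [abs_of_nonpos hc0] at hk
  have hr' : r = -c + 2*k := by omega
  have hk1 : 1 ≤ k := by omega
  obtain ⟨m, hm0⟩ := Int.even_mul_succ_self (k-1)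
  have hm : k*(k-1) = 2*m := by linear_combination hm0
  have hmnn : 0 ≤ m := by
    have h1 : 0 ≤ k*(k-1) := mul_nonneg (by omega) (by omega)
    linarith
  have hckn : c*k ≤ 0 := mul_nonpos_of_nonpos_of_nonneg hc0 (by omega)
  have core : ∀ x : ℤ, (x < 0 ∧ (dpc (0,0) (x, x + c) : ℤ) = r) ↔
      (c*k - m - k ≤ x ∧ x ≤ c*k - c - m - 1) := by
    intro x
    constructor
    · rintro ⟨hx, hd⟩
      obtain ⟨j, hj1, hjl, hjr⟩ := exists_j c hc0 (-x) (by omega)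
      have hdj := dpc_line x c j hx hc0 hj1 (by linarith) (by linarith)
      have hjk : j = k := by omega
      subst hjk
      have e1 : 2*(j-1)*(-c) + (j-1)*j = -2*(c*j) + 2*c + 2*m := by linear_combination hm
      have e2 : 2*j*(-c) + j*(j+1) = -2*(c*j) + 2*m + 2*j := by linear_combination hm
      constructor <;> linarith
    · rintro ⟨hl, hr2⟩
      have hck1 : c*(k-1) ≤ 0 := mul_nonpos_of_nonpos_of_nonneg hc0 (by omega)
      have hck1' : c*(k-1) = c*k - c := by ring
      have hx : x < 0 := by linarith
      have e1 : 2*(k-1)*(-c) + (k-1)*k = -2*(c*k) + 2*c + 2*m := by linear_combination hm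
      have e2 : 2*k*(-c) + k*(k+1) = -2*(c*k) + 2*m + 2*k := by linear_combination hm
      have hdj := dpc_line x c k hx hc0 hk1 (by linarith) (by linarith)
      exact ⟨hx, by omega⟩
  have hdiv1 : k*(k-1)/2 = m := by rw [hm]; omega
  have hdiv2 : (k+1)*k/2 = m + k := by
    rw [show (k+1)*k = 2*(m+k) from by linear_combination hm]; omega
  have hs1 : c*(k-1) - k*(k-1)/2 = c*k - c - m := by rw [hdiv1]; ring
  have hs2 : c*k - (k+1)*k/2 = c*k - m - k := by rw [hdiv2]; ring
  constructor
  · intro _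
    ext x
    simp only [Set.mem_setOf_eq, Set.mem_image, Set.mem_Icc]
    rw [core x]
    constructor
    · rintro ⟨h1, h2⟩
      refine ⟨x - (c*(k-1) - k*(k-1)/2), ⟨?_, ?_⟩, by ring⟩
      · rw [hs1]; linarith
      · rw [hs1]; linarith
    · rintro ⟨t, ⟨ht1, ht2⟩, hteq⟩
      rw [hs1] at hteq
      constructor <;> linarith
  · intro _
    ext x
    simp only [Set.mem_setOf_eq, Set.mem_image, Set.mem_Icc]
    rw [core x]
    constructor
    · rintro ⟨h1, h2⟩
      refine ⟨x - (c*k - (k+1)*k/2), ⟨?_, ?_⟩, by ring⟩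
      · rw [hs2]; linarith
      · rw [hs2]; linarith
    · rintro ⟨t, ⟨ht1, ht2⟩, hteq⟩
      rw [hs2] at hteq
      constructor <;> linarith
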